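/- Let G, F, and the disjoint 4-cycles C_i be as in the minimum-spanning-tree step: G \ F is a disjoint union of 4-cycles covering all vertices, each vertex incident to exactly one forced edge. Let H = ∪_i H_i where H_i is a fixed choice of opposite pair in C_i, and let G' be the graph whose vertices are connected components of F ∪ H, with an edge between two components for each C_i containing H_i-edges from both components. Then for every spanning tree T' of G', the symmetric difference of F ∪ H with the union of cycles C_i corresponding to edges of T' (i.e., replacing H_i by C_i \ H_i for those i) is a Hamiltonian cycle of G. -/

import Mathlib

namespace Stmt18Aux

open SimpleGraph

variable {V : Type*}

/-- Alternating orbit of two functions. -/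
def orb (f g : V → V) (v0 : V) : ℕ → V
  | 0 => v0
  | n+1 => (if n % 2 = 0 then g else f) (orb f g v0 n)

section

variable {A : SimpleGraph V} {f g : V → V} {v0 : V}

lemma orb_succ (f g : V → V) (v0 : V) (n : ℕ) :
    orb f g v0 (n+1) = (if n % 2 = 0 then g else f) (orb f g v0 n) := rfl

variable (hA : ∀ u v, A.Adj u v ↔ v = f u ∨ v = g u)
variable (hff : ∀ v, f (f v) = v) (hgg : ∀ v, g (g v) = v)

include hA in
lemma orb_adj (n : ℕ) : A.Adj (orb f g v0 n) (orb f g v0 (n+1)) := by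
  rw [hA, orb_succ]
  split
  · right; rfl
  · left; rfl

include hff hgg in
lemma orb_back (n : ℕ) :
    (if n % 2 = 0 then g else f) (orb f g v0 (n+1)) = orb f g v0 n := by
  rw [orb_succ]
  split
  · exact hgg _
  · exact hff _

include hA in
lemma orb_ne_succ (n : ℕ) : orb f g v0 (n+1) ≠ orb f g v0 n :=
  (orb_adj hA n).ne'

include hA in
lemma orb_reach (n : ℕ) : A.Reachable (orb f g v0 0) (orb f g v0 n) := by
  induction n with
  | zero => exact Reachable.refl _
  | succ n ih => exact ih.trans (orb_adj hA n).reachable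

include hff hgg in
lemma orb_refl_pairs {a b : ℕ} (hpar : a % 2 ≠ b % 2) (hab : a ≤ b)
    (heq : orb f g v0 a = orb f g v0 b) :
    ∀ k, k ≤ b - a → orb f g v0 (a + k) = orb f g v0 (b - k) := by
  intro k
  induction k with
  | zero => simpa using heq
  | succ k ih =>
    intro hk
    have hk' : k ≤ b - a := by omega
    have h1 : orb f g v0 (a + k) = orb f g v0 (b - k) := ih hk'
    have hpar2 : (a + k) % 2 = (b - (k+1)) % 2 := by omega
    have hb : b - k = (b - (k+1)) + 1 := by omega
    calc orb f g v0 (a + (k+1))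
        = (if (a+k) % 2 = 0 then g else f) (orb f g v0 (a + k)) := by
          rw [show a + (k+1) = (a+k)+1 by omega, orb_succ]
      _ = (if (b - (k+1)) % 2 = 0 then g else f) (orb f g v0 (b - k)) := by
          rw [hpar2, h1]
      _ = orb f g v0 (b - (k+1)) := by
          rw [hb]; exact orb_back hff hgg _

include hA hff hgg in
lemma orb_parity_eq {a b : ℕ} (hab : a ≤ b)
    (heq : orb f g v0 a = orb f g v0 b) : a % 2 = b % 2 := by
  by_contra hpar
  have hlt : a < b := by omega
  set t := (b - a) / 2 with ht
  have hodd : b - a = 2 * t + 1 := by omega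
  have h1 := orb_refl_pairs hff hgg hpar hab heq t (by omega)
  have h2 := orb_refl_pairs hff hgg hpar hab heq (t+1) (by omega)
  rw [show b - (t+1) = a + t by omega] at h2
  rw [show b - t = (a + t) + 1 by omega] at h1
  rw [show a + (t+1) = (a+t)+1 by omega] at h2
  exact orb_ne_succ hA (a+t) h2

include hff hgg in
lemma orb_shift : ∀ a b : ℕ, a ≤ b → a % 2 = b % 2 →
    orb f g v0 a = orb f g v0 b → orb f g v0 0 = orb f g v0 (b - a) := by
  intro a
  induction a with
  | zero => intro b _ _ h; simpa using h
  | succ a ih =>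
    intro b hab hpar heq
    have hb1 : b = (b - 1) + 1 := by omega
    have hpar2 : a % 2 = (b-1) % 2 := by omega
    have h1 : orb f g v0 a = orb f g v0 (b - 1) := by
      have e1 : (if a % 2 = 0 then g else f) (orb f g v0 (a+1)) = orb f g v0 a :=
        orb_back hff hgg a
      have e2 : (if (b-1) % 2 = 0 then g else f) (orb f g v0 b) = orb f g v0 (b-1) := by
        rw [hb1]; exact orb_back hff hgg _
      rw [← e1, ← e2, heq, hpar2]
    have := ih (b-1) (by omega) hpar2 h1
    rwa [show b - 1 - a = b - (a+1) by omega] at this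

include hA hff hgg in
lemma orb_exists_return [Finite V] : ∃ n, 0 < n ∧ orb f g v0 n = orb f g v0 0 := by
  obtain ⟨a, b, hne, heq⟩ := Finite.exists_ne_map_eq_of_infinite (orb f g v0)
  rcases Nat.lt_or_ge a b with h | h
  · have hpar : a % 2 = b % 2 := orb_parity_eq hA hff hgg h.le heq
    exact ⟨b - a, by omega, (orb_shift hff hgg a b h.le hpar heq).symm⟩
  · have hlt : b < a := by omega
    have hpar : b % 2 = a % 2 := orb_parity_eq hA hff hgg hlt.le heq.symm
    exact ⟨a - b, by omega, (orb_shift hff hgg b a hlt.le hpar heq.symm).symm⟩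

section Period

variable (f g v0) in
/-- bundled hypothesis: p is the minimal positive return time -/
structure IsPeriod (p : ℕ) : Prop where
  pos : 0 < p
  ret : orb f g v0 p = orb f g v0 0
  min : ∀ k, 0 < k → k < p → orb f g v0 k ≠ orb f g v0 0

variable {p : ℕ} (hp : IsPeriod f g v0 p)

-- assumed from part 1:
variable (orb_parity_eq' : ∀ {a b : ℕ}, a ≤ b → orb f g v0 a = orb f g v0 b → a % 2 = b % 2)
variable (orb_shift' : ∀ a b : ℕ, a ≤ b → a % 2 = b % 2 →
    orb f g v0 a = orb f g v0 b → orb f g v0 0 = orb f g v0 (b - a))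

include hp orb_parity_eq' orb_shift' in
lemma orb_injp : ∀ a b : ℕ, a ≤ p → b ≤ p → orb f g v0 a = orb f g v0 b →
    a = b ∨ (a = 0 ∧ b = p) ∨ (a = p ∧ b = 0) := by
  have key : ∀ a b : ℕ, a < b → b ≤ p → orb f g v0 a = orb f g v0 b →
      a = 0 ∧ b = p := by
    intro a b hab hbp heq
    have hpar := orb_parity_eq' hab.le heq
    have h0 := orb_shift' a b hab.le hpar heq
    rcases Nat.lt_or_ge (b - a) p with h | h
    · exact absurd h0.symm (hp.min _ (by omega) h)
    · omega
  intro a b hap hbp heq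
  rcases Nat.lt_trichotomy a b with h | h | h
  · have := key a b h hbp heq
    right; left; exact this
  · left; exact h
  · have := key b a h hap heq.symm
    right; right; exact ⟨this.2, this.1⟩

include hp orb_parity_eq' in
lemma orb_p_even : p % 2 = 0 := by
  have := orb_parity_eq' (Nat.zero_le p) hp.ret.symm
  omega

include hp orb_parity_eq' in
lemma orb_period : ∀ n, orb f g v0 (n + p) = orb f g v0 n := by
  have hpe : p % 2 = 0 := orb_p_even hp orb_parity_eq'
  intro n
  induction n with
  | zero => simpa using hp.ret
  | succ n ih =>
    rw [show n + 1 + p = (n + p) + 1 by omega, orb_succ, orb_succ,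
      show (n + p) % 2 = n % 2 by omega, ih]

include hp orb_parity_eq' in
lemma orb_mod : ∀ n, orb f g v0 n = orb f g v0 (n % p) := by
  intro n
  induction n using Nat.strong_induction_on with
  | _ n ih =>
    rcases Nat.lt_or_ge n p with h | h
    · rw [Nat.mod_eq_of_lt h]
    · have h1 : n = (n - p) + p := by omega
      have hpos := hp.pos
      have h2 : n % p = (n - p) % p := by
        conv_lhs => rw [h1]
        rw [Nat.add_mod_right]
      have key : orb f g v0 n = orb f g v0 (n - p) := by
        conv_lhs => rw [h1]
        exact orb_period hp orb_parity_eq' (n - p)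
      rw [h2, key]
      exact ih (n - p) (by omega)

include hp orb_parity_eq' in
lemma orb_succ_mod (k : ℕ) :
    s(orb f g v0 k, orb f g v0 (k+1)) =
      s(orb f g v0 (k % p), orb f g v0 ((k % p) + 1)) := by
  have h1 : orb f g v0 k = orb f g v0 (k % p) := orb_mod hp orb_parity_eq' k
  have h2 : orb f g v0 (k+1) = orb f g v0 ((k % p) + 1) := by
    rw [orb_mod hp orb_parity_eq' (k+1), orb_mod hp orb_parity_eq' (k % p + 1),
      show (k % p + 1) % p = (k + 1) % p by
        rw [Nat.add_mod (k % p) 1, Nat.add_mod k 1, Nat.mod_mod_of_dvd _ (dvd_refl p)]]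
  rw [h1, h2]

include hp orb_parity_eq' hff in
lemma orb_f_step (n : ℕ) : ∃ k,
    (orb f g v0 k = orb f g v0 n ∧ orb f g v0 (k+1) = f (orb f g v0 n)) ∨
    (orb f g v0 k = f (orb f g v0 n) ∧ orb f g v0 (k+1) = orb f g v0 n) := by
  have hper : orb f g v0 (n + p) = orb f g v0 n := orb_period hp orb_parity_eq' n
  have hpos := hp.pos
  rcases Nat.even_or_odd (n + p) with he | ho
  · obtain ⟨M, hM⟩ : ∃ M, n + p = M + 1 := ⟨n + p - 1, by omega⟩
    have h1 : orb f g v0 (M+1) = f (orb f g v0 M) := by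
      rw [orb_succ, if_neg (by rcases he with ⟨t,ht⟩; omega)]
    refine ⟨M, .inr ⟨?_, ?_⟩⟩
    · rw [← hper, hM, h1, hff]
    · rw [← hper, hM]
  · exact ⟨n + p, .inl ⟨hper, by
      rw [orb_succ, if_neg (by rcases ho with ⟨t,ht⟩; omega), hper]⟩⟩

include hp orb_parity_eq' hgg in
lemma orb_g_step (n : ℕ) : ∃ k,
    (orb f g v0 k = orb f g v0 n ∧ orb f g v0 (k+1) = g (orb f g v0 n)) ∨
    (orb f g v0 k = g (orb f g v0 n) ∧ orb f g v0 (k+1) = orb f g v0 n) := by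
  have hper : orb f g v0 (n + p) = orb f g v0 n := orb_period hp orb_parity_eq' n
  have hpos := hp.pos
  rcases Nat.even_or_odd (n + p) with he | ho
  · exact ⟨n + p, .inl ⟨hper, by
      rw [orb_succ, if_pos (by rcases he with ⟨t,ht⟩; omega), hper]⟩⟩
  · obtain ⟨M, hM⟩ : ∃ M, n + p = M + 1 := ⟨n + p - 1, by omega⟩
    have h1 : orb f g v0 (M+1) = g (orb f g v0 M) := by
      rw [orb_succ, if_pos (by rcases ho with ⟨t,ht⟩; omega)]
    refine ⟨M, .inr ⟨?_, ?_⟩⟩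
    · rw [← hper, hM, h1, hgg]
    · rw [← hper, hM]

include hp orb_parity_eq' hff in
lemma orb_f_edge (n : ℕ) : ∃ k, k < p ∧
    s(orb f g v0 n, f (orb f g v0 n)) = s(orb f g v0 k, orb f g v0 (k+1)) := by
  obtain ⟨k, hk⟩ := orb_f_step (g := g) (v0 := v0) (hff := hff) (hp := hp) (orb_parity_eq' := orb_parity_eq') n
  refine ⟨k % p, Nat.mod_lt _ hp.pos, ?_⟩
  rw [← orb_succ_mod hp orb_parity_eq' k]
  rcases hk with ⟨h1, h2⟩ | ⟨h1, h2⟩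
  · rw [h1, h2]
  · rw [h1, h2, Sym2.eq_swap]

include hp orb_parity_eq' hgg in
lemma orb_g_edge (n : ℕ) : ∃ k, k < p ∧
    s(orb f g v0 n, g (orb f g v0 n)) = s(orb f g v0 k, orb f g v0 (k+1)) := by
  obtain ⟨k, hk⟩ := orb_g_step (f := f) (v0 := v0) (hgg := hgg) (hp := hp) (orb_parity_eq' := orb_parity_eq') n
  refine ⟨k % p, Nat.mod_lt _ hp.pos, ?_⟩
  rw [← orb_succ_mod hp orb_parity_eq' k]
  rcases hk with ⟨h1, h2⟩ | ⟨h1, h2⟩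
  · rw [h1, h2]
  · rw [h1, h2, Sym2.eq_swap]



include hff hp orb_parity_eq' in
lemma orb_p_ge_four (hfg : ∀ v, f v ≠ g v) : 4 ≤ p := by
  have he := orb_p_even hp orb_parity_eq'
  have h0 := hp.pos
  have h2 : p ≠ 2 := by
    intro h2
    have hret := hp.ret
    rw [h2] at hret
    have e1 : orb f g v0 1 = g v0 := by rw [orb_succ]; simp; rfl
    have e2 : orb f g v0 2 = f (g v0) := by
      rw [orb_succ, if_neg (by omega), e1]
    rw [e2] at hret
    have hret' : orb f g v0 0 = v0 := rfl
    rw [hret'] at hret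
    have := congrArg f hret
    rw [hff] at this
    exact hfg v0 this.symm
  omega

end Period

include hA hff hgg in
lemma exists_isPeriod [Finite V] : ∃ p, IsPeriod f g v0 p := by
  classical
  have hex := orb_exists_return hA hff hgg (v0 := v0)
  refine ⟨Nat.find hex, ⟨(Nat.find_spec hex).1, (Nat.find_spec hex).2, ?_⟩⟩
  intro k hk hklt hkeq
  exact Nat.find_min hex hklt ⟨hk, hkeq⟩

end

lemma reachable_of_adj_imp {A B : SimpleGraph V} (h : ∀ u v, A.Adj u v → B.Reachable u v) :
    ∀ u v, A.Reachable u v → B.Reachable u v := by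
  intro u v hr
  obtain ⟨w⟩ := hr
  induction w with
  | nil => exact Reachable.refl _
  | cons hadj _ ih => exact (h _ _ hadj).trans ih

lemma eqvGen_to_reachable {A : SimpleGraph V} {r : V → V → Prop}
    (h : ∀ u v, r u v → A.Reachable u v) :
    ∀ u v, Relation.EqvGen r u v → A.Reachable u v := by
  intro u v hr
  induction hr with
  | rel a b hab => exact h _ _ hab
  | refl a => exact Reachable.refl _
  | symm a b _ ih => exact ih.symm
  | trans a b c _ _ ih1 ih2 => exact ih1.trans ih2

lemma reachable_to_eqvGen {A : SimpleGraph V} {r : V → V → Prop}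
    (h : ∀ u v, A.Adj u v → Relation.EqvGen r u v) :
    ∀ u v, A.Reachable u v → Relation.EqvGen r u v := by
  intro u v hr
  obtain ⟨w⟩ := hr
  induction w with
  | nil => exact Relation.EqvGen.refl _
  | cons hadj _ ih => exact Relation.EqvGen.trans _ _ _ (h _ _ hadj) ih

/-- A walk along a chain of adjacent vertices. -/
def chainWalk (G : SimpleGraph V) (x : ℕ → V) (hx : ∀ n, G.Adj (x n) (x (n+1))) :
    (k : ℕ) → G.Walk (x 0) (x k)
  | 0 => SimpleGraph.Walk.nil
  | k+1 => (chainWalk G x hx k).concat (hx k)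

lemma chainWalk_support (G : SimpleGraph V) (x : ℕ → V) (hx : ∀ n, G.Adj (x n) (x (n+1)))
    (k : ℕ) : (chainWalk G x hx k).support = (List.range (k+1)).map x := by
  induction k with
  | zero => simp [chainWalk, List.range_succ]
  | succ k ih => simp [chainWalk, ih, List.range_succ]

lemma chainWalk_edges (G : SimpleGraph V) (x : ℕ → V) (hx : ∀ n, G.Adj (x n) (x (n+1)))
    (k : ℕ) : (chainWalk G x hx k).edges = (List.range k).map (fun n => s(x n, x (n+1))) := by
  induction k with
  | zero => simp [chainWalk, List.range_succ]
  | succ k ih => simp [chainWalk, ih, List.range_succ]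

lemma chainWalk_length (G : SimpleGraph V) (x : ℕ → V) (hx : ∀ n, G.Adj (x n) (x (n+1)))
    (k : ℕ) : (chainWalk G x hx k).length = k := by
  induction k with
  | zero => rfl
  | succ k ih => simp [chainWalk, Walk.length_concat, ih]

lemma ham_of_invol [Fintype V] [DecidableEq V] {G A : SimpleGraph V} {f g : V → V}
    (hAG : A ≤ G) (hA : ∀ u v, A.Adj u v ↔ v = f u ∨ v = g u)
    (hff : ∀ v, f (f v) = v) (hgg : ∀ v, g (g v) = v) (hfg : ∀ v, f v ≠ g v)
    (hconn : A.Connected) :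
    ∃ (v : V) (w : G.Walk v v), w.IsHamiltonianCycle ∧ {e | e ∈ w.edges} = A.edgeSet := by
  classical
  obtain ⟨v0⟩ := hconn.nonempty
  obtain ⟨p, hp⟩ := exists_isPeriod hA hff hgg (v0 := v0)
  set x := orb f g v0 with hxdef
  have hpar : ∀ {a b : ℕ}, a ≤ b → x a = x b → a % 2 = b % 2 :=
    fun h1 h2 => orb_parity_eq hA hff hgg h1 h2
  have hshift : ∀ a b : ℕ, a ≤ b → a % 2 = b % 2 → x a = x b → x 0 = x (b - a) :=
    orb_shift hff hgg (v0 := v0)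
  have injp := orb_injp (hp := hp) (orb_parity_eq' := hpar) (orb_shift' := hshift)
  have p4 : 4 ≤ p := orb_p_ge_four (hff := hff) (hp := hp) (orb_parity_eq' := hpar) hfg
  have hGadj : ∀ n, G.Adj (x n) (x (n+1)) := fun n => hAG (orb_adj hA n)
  have hpret : x p = x 0 := hp.ret
  let W0 := chainWalk G x hGadj p
  let W : G.Walk (x 0) (x 0) := W0.copy rfl hpret
  have hsupp : W.support = (List.range (p+1)).map x := by
    simp [W, W0, chainWalk_support]
  have hedges : W.edges = (List.range p).map (fun n => s(x n, x (n+1))) := by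
    simp [W, W0, chainWalk_edges]
  have hlen : W.length = p := by
    simp [W, W0, chainWalk_length]
  have hsurj : ∀ w, ∃ k, k < p ∧ x k = w := by
    intro w
    have hreach : A.Reachable (x 0) w := hconn.preconnected _ _
    rw [reachable_iff_reflTransGen] at hreach
    have hex : ∃ k, x k = w := by
      induction hreach with
      | refl => exact ⟨0, rfl⟩
      | tail _ hadj ih =>
        obtain ⟨k, rfl⟩ := ih
        rw [hA] at hadj
        rcases hadj with rfl | rfl
        · obtain ⟨k', hk'⟩ := orb_f_step (g := g) (v0 := v0) (hff := hff) (hp := hp)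
            (orb_parity_eq' := hpar) k
          rcases hk' with ⟨_, h2⟩ | ⟨h1, _⟩
          · exact ⟨k'+1, h2⟩
          · exact ⟨k', h1⟩
        · obtain ⟨k', hk'⟩ := orb_g_step (f := f) (v0 := v0) (hgg := hgg) (hp := hp)
            (orb_parity_eq' := hpar) k
          rcases hk' with ⟨_, h2⟩ | ⟨h1, _⟩
          · exact ⟨k'+1, h2⟩
          · exact ⟨k', h1⟩
    obtain ⟨k, rfl⟩ := hex
    exact ⟨k % p, Nat.mod_lt _ hp.pos, (orb_mod (hp := hp) (orb_parity_eq' := hpar) k).symm⟩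
  -- tail of support
  have htail : W.support.tail = (List.range p).map (fun n => x (n+1)) := by
    rw [hsupp, List.range_succ_eq_map, List.map_cons, List.tail_cons, List.map_map]
    rfl
  have htail_nodup : (W.support.tail).Nodup := by
    rw [htail]
    refine List.Nodup.map_on ?_ List.nodup_range
    intro a ha b hb heq
    rw [List.mem_range] at ha hb
    rcases injp (a+1) (b+1) (by omega) (by omega) heq with h | h | h <;> omega
  refine ⟨x 0, W, ?_, ?_⟩
  · rw [Walk.isHamiltonianCycle_iff_isCycle_and_support_count_tail_eq_one]
    constructor
    · refine ⟨⟨⟨?_⟩, ?_⟩, ?_⟩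
      · -- edges nodup
        rw [hedges]
        refine List.Nodup.map_on ?_ List.nodup_range
        intro a ha b hb heq
        rw [List.mem_range] at ha hb
        rcases Sym2.eq_iff.mp heq with ⟨h1, h2⟩ | ⟨h1, h2⟩
        · rcases injp a b (by omega) (by omega) h1 with h | h | h <;> omega
        · rcases injp a (b+1) (by omega) (by omega) h1 with h | h | h <;>
            rcases injp (a+1) b (by omega) (by omega) h2 with h' | h' | h' <;> omega
      · -- ne nil
        intro h
        have := congrArg SimpleGraph.Walk.length h
        rw [hlen] at this
        simp at this
        omega
      · exact htail_nodup
    · intro a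
      have hmem : a ∈ W.support.tail := by
        rw [htail]
        obtain ⟨k, hk, rfl⟩ := hsurj a
        rcases Nat.eq_zero_or_pos k with rfl | hkpos
        · refine List.mem_map.mpr ⟨p-1, List.mem_range.mpr (by omega), ?_⟩
          rw [show p-1+1 = p by omega, hpret]
        · exact List.mem_map.mpr ⟨k-1, List.mem_range.mpr (by omega),
            by rw [show k-1+1 = k by omega]⟩
      exact List.count_eq_one_of_mem htail_nodup hmem
  · ext e
    induction e using Sym2.ind with
    | _ u w =>
      simp only [Set.mem_setOf_eq, hedges, List.mem_map, List.mem_range, mem_edgeSet]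
      constructor
      · rintro ⟨n, hn, heq⟩
        rcases Sym2.eq_iff.mp heq with ⟨rfl, rfl⟩ | ⟨rfl, rfl⟩
        · exact orb_adj hA n
        · exact (orb_adj hA n).symm
      · intro he
        rw [hA] at he
        obtain ⟨k, hk, rfl⟩ := hsurj u
        rcases he with rfl | rfl
        · obtain ⟨k', hk', heq⟩ := orb_f_edge (g := g) (v0 := v0) (hff := hff)
            (hp := hp) (orb_parity_eq' := hpar) k
          exact ⟨k', hk', heq.symm⟩
        · obtain ⟨k', hk', heq⟩ := orb_g_edge (f := f) (v0 := v0) (hgg := hgg)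
            (hp := hp) (orb_parity_eq' := hpar) k
          exact ⟨k', hk', heq.symm⟩

lemma detour [Fintype V] {A B : SimpleGraph V} {f g : V → V}
    (hA : ∀ u v, A.Adj u v ↔ v = f u ∨ v = g u)
    (hff : ∀ v, f (f v) = v) (hgg : ∀ v, g (g v) = v) (hfg : ∀ v, f v ≠ g v)
    (u : V)
    (hsub : ∀ a b, A.Adj a b → A.Reachable u a → s(a, b) ≠ s(u, g u) → B.Adj a b) :
    B.Reachable u (g u) := by
  classical
  obtain ⟨p, hp⟩ := exists_isPeriod hA hff hgg (v0 := u)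
  set x := orb f g u with hxdef
  have hpar : ∀ {a b : ℕ}, a ≤ b → x a = x b → a % 2 = b % 2 :=
    fun h1 h2 => orb_parity_eq hA hff hgg h1 h2
  have hshift : ∀ a b : ℕ, a ≤ b → a % 2 = b % 2 → x a = x b → x 0 = x (b - a) :=
    orb_shift hff hgg (v0 := u)
  have injp := orb_injp (hp := hp) (orb_parity_eq' := hpar) (orb_shift' := hshift)
  have p4 : 4 ≤ p := orb_p_ge_four (hff := hff) (hp := hp) (orb_parity_eq' := hpar) hfg
  have hpret : x p = x 0 := hp.ret
  have hx0 : x 0 = u := rfl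
  have hx1 : x 1 = g u := by
    show orb f g u 1 = g u
    rw [orb_succ, if_pos (by norm_num)]
    rfl
  have claim : ∀ j, j ≤ p - 1 → B.Reachable (x (p - j)) (x p) := by
    intro j
    induction j with
    | zero => intro _; rw [Nat.sub_zero]
    | succ j ih =>
      intro hj
      have hk1 : (p - (j+1)) + 1 = p - j := by omega
      have hadjk : A.Adj (x (p - (j+1))) (x (p - (j+1) + 1)) := orb_adj hA _
      have hreachk : A.Reachable u (x (p - (j+1))) := hx0 ▸ orb_reach hA _
      have hne : s(x (p - (j+1)), x (p - (j+1) + 1)) ≠ s(u, g u) := by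
        rw [← hx1, ← hx0]
        intro hcontra
        rcases Sym2.eq_iff.mp hcontra with ⟨h1, h2⟩ | ⟨h1, h2⟩
        · rcases injp (p - (j+1)) 0 (by omega) (by omega) h1 with h | h | h <;> omega
        · rcases injp (p - (j+1)) 1 (by omega) (by omega) h1 with h | h | h
          · rw [h] at h2
            rcases injp 2 0 (by omega) (by omega) h2 with h' | h' | h' <;> omega
          · omega
          · omega
      have hBadj := hsub _ _ hadjk hreachk hne
      exact hBadj.reachable.trans (hk1 ▸ ih (by omega))
  have h1p := claim (p - 1) (le_refl _)
  rw [show p - (p - 1) = 1 by omega, hpret, hx0, hx1] at h1p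
  exact h1p.symm

end Stmt18Aux
/-- `IsHamCycleSet G C` : `C` is the edge set of some Hamiltonian cycle of `G`. -/
def IsHamCycleSet {V : Type*} [DecidableEq V] (G : SimpleGraph V) (C : Set (Sym2 V)) : Prop :=
  ∃ (v : V) (p : G.Walk v v), p.IsHamiltonianCycle ∧ C = {e | e ∈ p.edges}

/-- In the minimum-spanning-tree setting (max degree 3, unforced edges forming vertex-disjoint
4-cycles `C_i` covering all vertices, each vertex on exactly one forced edge, and `H_i` a chosen
opposite pair of each `C_i`): if `S` indexes a spanning tree of the component graph `G'` of
`F ∪ H`, then the symmetric difference of `F ∪ H` with the union of the 4-cycles `C_i`, `i ∈ S`,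
is a Hamiltonian cycle of `G`. -/
theorem stmt_18 {V : Type*} [Fintype V] [DecidableEq V] (G : SimpleGraph V)
    (hdeg : ∀ v : V, (G.neighborSet v).ncard ≤ 3)
    (F : Set (Sym2 V)) (hF : F ⊆ G.edgeSet)
    (m : ℕ) (q : Fin m → Fin 4 → V)
    (hbij : Function.Bijective fun p : Fin m × Fin 4 => q p.1 p.2)
    (hadj : ∀ i j, G.Adj (q i j) (q i (j + 1)))
    (hunforced : ∀ e : Sym2 V,
      e ∈ G.edgeSet \ F ↔ ∃ i j, e = s(q i j, q i (j + 1)))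
    (hforced : ∀ v : V, {e ∈ F | v ∈ e}.ncard = 1)
    (σ : Fin m → Fin 4)
    (H : Set (Sym2 V))
    (hH : H = {e : Sym2 V | ∃ i, e = s(q i (σ i), q i (σ i + 1)) ∨
        e = s(q i (σ i + 2), q i (σ i + 3))})
    (K : SimpleGraph V) (hK : K = SimpleGraph.fromEdgeSet (F ∪ H))
    (S : Set (Fin m))
    -- `S` indexes a spanning tree of the component graph `G'` of `F ∪ H`:
    (htree : (SimpleGraph.fromEdgeSet {e : Sym2 K.ConnectedComponent | ∃ i ∈ S,
        e = s(K.connectedComponentMk (q i (σ i)),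
              K.connectedComponentMk (q i (σ i + 2)))}).IsTree)
    (hcount : S.ncard = Nat.card K.ConnectedComponent - 1) :
    IsHamCycleSet G
      (symmDiff (F ∪ H)
        (⋃ i ∈ S, {e : Sym2 V | ∃ j, e = s(q i j, q i (j + 1))})) := by
  classical
  -- basic injectivity facts
  have qinj : Function.Injective (fun p : Fin m × Fin 4 => q p.1 p.2) := hbij.injective
  have hq : ∀ {i i' : Fin m} {j j' : Fin 4}, q i j = q i' j' ↔ (i = i' ∧ j = j') := by
    intro i i' j j'
    constructor
    · intro h
      have := qinj (a₁ := (i, j)) (a₂ := (i', j')) h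
      exact ⟨congrArg Prod.fst this, congrArg Prod.snd this⟩
    · rintro ⟨rfl, rfl⟩; rfl
  set E : Fin m → Fin 4 → Sym2 V := fun i j => s(q i j, q i (j+1)) with hEdef
  have hE : ∀ {i i' : Fin m} {j j' : Fin 4}, E i j = E i' j' ↔ (i = i' ∧ j = j') := by
    intro i i' j j'
    constructor
    · intro h
      rcases Sym2.eq_iff.mp h with ⟨h1, h2⟩ | ⟨h1, h2⟩
      · exact ⟨(hq.mp h1).1, (hq.mp h1).2⟩
      · obtain ⟨rfl, hj1⟩ := hq.mp h1
        obtain ⟨-, hj2⟩ := hq.mp h2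
        have hFin : ∀ a b : Fin 4, a = b + 1 → a + 1 = b → False := by decide
        exact (hFin j j' hj1 hj2).elim
    · rintro ⟨rfl, rfl⟩; rfl
  have hEG : ∀ i j, E i j ∈ G.edgeSet \ F := fun i j => (hunforced _).mpr ⟨i, j, rfl⟩
  -- the forced-edge involution
  have hfex : ∀ v : V, ∃ w, w ≠ v ∧ s(v, w) ∈ F ∧ ∀ e ∈ F, v ∈ e → e = s(v, w) := by
    intro v
    obtain ⟨e, he⟩ := Set.ncard_eq_one.mp (hforced v)
    have hev : e ∈ F ∧ v ∈ e := by
      have : e ∈ {e ∈ F | v ∈ e} := by rw [he]; rfl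
      exact this
    obtain ⟨w, rfl⟩ := Sym2.mem_iff_exists.mp hev.2
    refine ⟨w, ?_, hev.1, ?_⟩
    · exact ((SimpleGraph.mem_edgeSet G).mp (hF hev.1)).ne'
    · intro e' he' hve'
      have : e' ∈ {e ∈ F | v ∈ e} := ⟨he', hve'⟩
      rw [he] at this
      exact this
  choose fF hf1 hf2 hf3 using hfex
  have hff : ∀ v, fF (fF v) = v := by
    intro v
    have h1 := hf3 (fF v) _ (hf2 v) (Sym2.mem_mk_right _ _)
    rcases Sym2.eq_iff.mp h1 with ⟨h, h'⟩ | ⟨h, h'⟩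
    · exact absurd h.symm (hf1 v)
    · exact h.symm
  have hFdesc : ∀ e, e ∈ F ↔ ∃ v, e = s(v, fF v) := by
    intro e
    constructor
    · intro he
      exact ⟨e.out.1, hf3 _ _ he (Sym2.out_fst_mem e)⟩
    · rintro ⟨v, rfl⟩; exact hf2 v
  -- Sym2 involution helper
  have hinvH : ∀ (h : V → V), (∀ x, h (h x) = x) → ∀ u w v, s(u,w) = s(v, h v) → w = h u := by
    intro h hh u w v heq
    rcases Sym2.eq_iff.mp heq with ⟨rfl, rfl⟩ | ⟨rfl, rfl⟩
    · rfl
    · exact (hh w).symm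
  -- the cycle-matching involutions
  set swp : Fin 4 → Fin 4 := ![1, 0, 3, 2] with hswp
  set ι : (Fin m × Fin 4) ≃ V := Equiv.ofBijective _ hbij with hι
  set gP : (Fin m → Fin 4) → V → V := fun τ v =>
    q (ι.symm v).1 (τ (ι.symm v).1 + swp ((ι.symm v).2 - τ (ι.symm v).1)) with hgP
  have hιq : ∀ i j, ι.symm (q i j) = (i, j) := by
    intro i j
    rw [Equiv.symm_apply_eq]
    rfl
  have hgq : ∀ τ i j, gP τ (q i j) = q i (τ i + swp (j - τ i)) := by
    intro τ i j
    rw [hgP]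
    simp only [hιq]
  have hqsurj : ∀ v : V, ∃ i j, v = q i j := by
    intro v
    obtain ⟨⟨i, j⟩, h⟩ := hbij.surjective v
    exact ⟨i, j, h.symm⟩
  set Hs : (Fin m → Fin 4) → Set (Sym2 V) :=
    fun τ => {e | ∃ i, e = E i (τ i) ∨ e = E i (τ i + 2)} with hHs
  have hHdesc : ∀ τ, Hs τ = {e | ∃ v, e = s(v, gP τ v)} := by
    intro τ
    ext e
    simp only [hHs, Set.mem_setOf_eq]
    constructor
    · rintro ⟨i, h | h⟩
      · refine ⟨q i (τ i), ?_⟩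
        rw [h, hgq]
        have : ∀ t : Fin 4, t + swp (t - t) = t + 1 := by rw [hswp]; decide
        rw [this]
      · refine ⟨q i (τ i + 2), ?_⟩
        rw [h, hgq]
        have : ∀ t : Fin 4, t + swp ((t + 2) - t) = (t + 2) + 1 := by rw [hswp]; decide
        rw [this]
    · rintro ⟨v, rfl⟩
      obtain ⟨i, j, rfl⟩ := hqsurj v
      rw [hgq]
      have key : ∀ t j : Fin 4, (j = t ∧ t + swp (j - t) = t + 1) ∨
          (j = t + 1 ∧ t + swp (j - t) = t) ∨
          (j = t + 2 ∧ t + swp (j - t) = (t + 2) + 1) ∨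
          (j = (t + 2) + 1 ∧ t + swp (j - t) = t + 2) := by rw [hswp]; decide
      rcases key (τ i) j with ⟨h1, h2⟩ | ⟨h1, h2⟩ | ⟨h1, h2⟩ | ⟨h1, h2⟩ <;> rw [h2, h1]
      · exact ⟨i, Or.inl rfl⟩
      · exact ⟨i, Or.inl (Sym2.eq_swap)⟩
      · exact ⟨i, Or.inr rfl⟩
      · exact ⟨i, Or.inr (Sym2.eq_swap)⟩
  have hgg : ∀ τ v, gP τ (gP τ v) = v := by
    intro τ v
    obtain ⟨i, j, rfl⟩ := hqsurj v
    have key : ∀ t j : Fin 4, t + swp ((t + swp (j - t)) - t) = j := by rw [hswp]; decide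
    rw [hgq τ i j, hgq τ i (τ i + swp (j - τ i)), key]
  have hgne : ∀ τ v, gP τ v ≠ v := by
    intro τ v
    obtain ⟨i, j, rfl⟩ := hqsurj v
    rw [hgq]
    have : ∀ t j : Fin 4, t + swp (j - t) ≠ j := by rw [hswp]; decide
    intro hcon
    exact this (τ i) j (hq.mp hcon).2
  have hHsub : ∀ τ, Hs τ ⊆ G.edgeSet \ F := by
    intro τ e
    rintro ⟨i, h | h⟩ <;> rw [h] <;> exact hEG _ _
  have hfg : ∀ τ v, fF v ≠ gP τ v := by
    intro τ v hcon
    have h1 : s(v, fF v) ∈ F := hf2 v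
    have h2 : s(v, gP τ v) ∈ Hs τ := by rw [hHdesc]; exact ⟨v, rfl⟩
    rw [← hcon] at h2
    exact (hHsub τ h2).2 h1
  set Kg : (Fin m → Fin 4) → SimpleGraph V :=
    fun τ => SimpleGraph.fromEdgeSet (F ∪ Hs τ) with hKg
  have hKadj : ∀ τ u w, (Kg τ).Adj u w ↔ (w = fF u ∨ w = gP τ u) := by
    intro τ u w
    rw [hKg]
    simp only [SimpleGraph.fromEdgeSet_adj, Set.mem_union]
    constructor
    · rintro ⟨hmem | hmem, hne⟩
      · obtain ⟨v, hv⟩ := (hFdesc _).mp hmem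
        exact Or.inl (hinvH fF hff u w v hv)
      · rw [hHdesc] at hmem
        obtain ⟨v, hv⟩ := hmem
        exact Or.inr (hinvH (gP τ) (hgg τ) u w v hv)
    · rintro (rfl | rfl)
      · exact ⟨Or.inl ((hFdesc _).mpr ⟨u, rfl⟩), Ne.symm (hf1 u)⟩
      · exact ⟨Or.inr (by rw [hHdesc]; exact ⟨u, rfl⟩), Ne.symm (hgne τ u)⟩
  have hKG : ∀ τ, Kg τ ≤ G := by
    intro τ u w h
    rw [hKg, SimpleGraph.fromEdgeSet_adj] at h
    rcases h.1 with hmem | hmem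
    · exact (SimpleGraph.mem_edgeSet G).mp (hF hmem)
    · exact (SimpleGraph.mem_edgeSet G).mp (hHsub τ hmem).1
  have hHσ : H = Hs σ := by
    rw [hH, hHs]
    have h23 : ∀ t : Fin 4, t + 2 + 1 = t + 3 := by decide
    ext e
    simp only [Set.mem_setOf_eq, hEdef, h23]
  have hKσ : K = Kg σ := by rw [hK, hHσ, hKg]
  set τf : Set (Fin m) → (Fin m → Fin 4) :=
    fun T i => if i ∈ T then σ i + 1 else σ i with hτf
  -- the symmetric difference is F ∪ Hs (τf S)
  have hsymm : symmDiff (F ∪ H) (⋃ i ∈ S, {e : Sym2 V | ∃ j, e = s(q i j, q i (j + 1))})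
      = F ∪ Hs (τf S) := by
    rw [hHσ]
    ext e
    have hY : e ∈ (⋃ i ∈ S, {e : Sym2 V | ∃ j, e = s(q i j, q i (j + 1))}) ↔
        ∃ i ∈ S, ∃ j, e = E i j := by
      simp only [Set.mem_iUnion, Set.mem_setOf_eq, exists_prop, hEdef]
    rw [Set.mem_symmDiff]
    by_cases hform : ∃ i j, e = E i j
    · obtain ⟨i, j, rfl⟩ := hform
      have hF' : E i j ∉ F := (hEG i j).2
      have hHm : ∀ τ, E i j ∈ Hs τ ↔ (j = τ i ∨ j = τ i + 2) := by
        intro τ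
        constructor
        · rintro ⟨i', h | h⟩
          · obtain ⟨rfl, rfl⟩ := hE.mp h
            exact Or.inl rfl
          · obtain ⟨rfl, rfl⟩ := hE.mp h
            exact Or.inr rfl
        · rintro (rfl | rfl)
          · exact ⟨i, Or.inl rfl⟩
          · exact ⟨i, Or.inr rfl⟩
      have hYm : (E i j ∈ ⋃ i ∈ S, {e : Sym2 V | ∃ j, e = s(q i j, q i (j + 1))}) ↔ i ∈ S := by
        rw [hY]
        constructor
        · rintro ⟨i', hi', j', h⟩
          obtain ⟨rfl, rfl⟩ := hE.mp h
          exact hi'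
        · intro hiS
          exact ⟨i, hiS, j, rfl⟩
      by_cases hiS : i ∈ S
      · have hτ : τf S i = σ i + 1 := if_pos hiS
        rw [Set.mem_union, Set.mem_union, hHm, hHm, hYm, hτ]
        have hf4 : ∀ t jj : Fin 4, (¬(jj = t ∨ jj = t + 2)) ↔
            (jj = t + 1 ∨ jj = t + 1 + 2) := by decide
        have hf5 : ∀ t jj : Fin 4, (jj = t + 1 ∨ jj = t + 1 + 2) →
            ¬(jj = t ∨ jj = t + 2) := by decide
        constructor
        · rintro (⟨-, hn⟩ | ⟨-, hn⟩)
          · exact absurd hiS hn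
          · exact Or.inr ((hf4 (σ i) j).mp (fun hp => hn (Or.inr hp)))
        · rintro (hFm | hp)
          · exact absurd hFm hF'
          · exact Or.inr ⟨hiS, fun hmem => hmem.elim hF' (hf5 (σ i) j hp)⟩
      · have hτ : τf S i = σ i := if_neg hiS
        rw [Set.mem_union, Set.mem_union, hHm, hHm, hYm, hτ]
        constructor
        · rintro (⟨hm, -⟩ | ⟨hy, -⟩)
          · exact hm
          · exact absurd hy hiS
        · intro h
          exact Or.inl ⟨h, hiS⟩
    · have h1 : e ∉ (⋃ i ∈ S, {e : Sym2 V | ∃ j, e = s(q i j, q i (j + 1))}) := by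
        rw [hY]
        rintro ⟨i, -, j, h⟩
        exact hform ⟨i, j, h⟩
      have h2 : ∀ τ, e ∉ Hs τ := by
        rintro τ ⟨i, h | h⟩
        · exact hform ⟨i, τ i, h⟩
        · exact hform ⟨i, τ i + 2, h⟩
      constructor
      · rintro (⟨hm, -⟩ | ⟨hy, -⟩)
        · rcases hm with hFm | hHm'
          · exact Or.inl hFm
          · exact absurd hHm' (h2 σ)
        · exact absurd hy h1
      · rintro (hFm | hHm')
        · exact Or.inl ⟨Or.inl hFm, h1⟩
        · exact absurd hHm' (h2 _)
  -- connectivity of the final graph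
  have hconn : (Kg (τf S)).Connected := by
    -- Fin 4 arithmetic facts
    have hT1 : ∀ t : Fin 4, t + 1 + 1 = t + 2 := by decide
    have hT2 : ∀ t : Fin 4, t + 1 + 2 = t + 2 + 1 := by decide
    have hT4 : ∀ t : Fin 4, t + 2 + 1 + 1 = t := by decide
    have hT5 : ∀ t : Fin 4, ¬(t = t + 1) := by decide
    have hT7 : ∀ t : Fin 4, ¬(t + 2 + 1 = t) := by decide
    -- abbreviations
    set cm : V → K.ConnectedComponent := K.connectedComponentMk with hcm
    set e' : Fin m → Sym2 K.ConnectedComponent :=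
      fun i => s(cm (q i (σ i)), cm (q i (σ i + 2))) with he'
    set T' : SimpleGraph K.ConnectedComponent :=
      SimpleGraph.fromEdgeSet {e | ∃ i ∈ S, e = e' i} with hT'
    have htree' : T'.IsTree := htree
    -- finiteness instances
    haveI : Finite K.ConnectedComponent := Quot.finite _
    haveI : Fintype K.ConnectedComponent := Fintype.ofFinite _
    haveI : DecidableEq K.ConnectedComponent := Classical.decEq _
    haveI : Fintype (T'.edgeSet) := Set.Finite.fintype (Set.toFinite _)
    -- adjacency helpers
    have hKgmem : ∀ τ a b, (Kg τ).Adj a b ↔ (s(a,b) ∈ F ∪ Hs τ ∧ a ≠ b) := by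
      intro τ a b
      rw [hKg]
      exact SimpleGraph.fromEdgeSet_adj _
    have hKmem : ∀ a b, K.Adj a b ↔ (s(a,b) ∈ F ∪ Hs σ ∧ a ≠ b) := by
      intro a b; rw [hKσ]; exact hKgmem σ a b
    have hKadjH1 : ∀ j : Fin m, K.Adj (q j (σ j)) (q j (σ j + 1)) := by
      intro j
      exact (hKmem _ _).mpr ⟨Or.inr ⟨j, Or.inl rfl⟩,
        fun hcon => hT5 (σ j) (hq.mp hcon).2⟩
    have hKadjH2 : ∀ j : Fin m, K.Adj (q j (σ j + 2)) (q j (σ j + 2 + 1)) := by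
      intro j
      exact (hKmem _ _).mpr ⟨Or.inr ⟨j, Or.inr rfl⟩,
        fun hcon => hT5 (σ j + 2) (hq.mp hcon).2⟩
    -- edge counting: the tree edges are exactly the `e' i`, injectively, no loops
    have hQcard : Nat.card K.ConnectedComponent = Fintype.card K.ConnectedComponent :=
      Nat.card_eq_fintype_card
    have hedgecard : T'.edgeFinset.card + 1 = Fintype.card K.ConnectedComponent :=
      htree'.card_edgeFinset
    have hTedge : T'.edgeSet = (e' '' S) \ {e : Sym2 K.ConnectedComponent | e.IsDiag} := by
      rw [hT', SimpleGraph.edgeSet_fromEdgeSet]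
      congr 1
      ext e
      constructor
      · rintro ⟨i, hi, rfl⟩
        exact Set.mem_image_of_mem _ hi
      · rintro ⟨i, hi, rfl⟩
        exact ⟨i, hi, rfl⟩
    have hecount : T'.edgeSet.ncard = S.ncard := by
      have h1 : T'.edgeSet.ncard = T'.edgeFinset.card := by
        rw [Set.ncard_eq_toFinset_card']
        congr 1
      rw [h1, hcount, hQcard]; omega
    have hle1 : ((e' '' S) \ {e : Sym2 K.ConnectedComponent | e.IsDiag}).ncard ≤
        (e' '' S).ncard := Set.ncard_le_ncard Set.diff_subset (Set.toFinite _)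
    have hle2 : (e' '' S).ncard ≤ S.ncard := Set.ncard_image_le (Set.toFinite _)
    have heq0 : ((e' '' S) \ {e : Sym2 K.ConnectedComponent | e.IsDiag}).ncard = S.ncard := by
      rw [← hTedge, hecount]
    have heqA : (e' '' S).ncard = S.ncard := le_antisymm hle2 (heq0 ▸ hle1)
    have hinjOn : Set.InjOn e' S := Set.injOn_of_ncard_image_eq heqA (Set.toFinite _)
    have hdiffeq : (e' '' S) \ {e : Sym2 K.ConnectedComponent | e.IsDiag} = e' '' S :=
      Set.eq_of_subset_of_ncard_le Set.diff_subset (by rw [heq0, heqA]) (Set.toFinite _)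
    have hnodiag : ∀ i ∈ S, cm (q i (σ i)) ≠ cm (q i (σ i + 2)) := by
      intro i hi hcon
      have hmem : e' i ∈ (e' '' S) \ {e : Sym2 K.ConnectedComponent | e.IsDiag} := by
        rw [hdiffeq]; exact Set.mem_image_of_mem _ hi
      exact hmem.2 (Sym2.mk_isDiag_iff.mpr hcon)
    have hij : ∀ i ∈ S, ∀ j ∈ S, e' i = e' j → i = j := fun i hi j hj h => hinjOn hi hj h
    have hedgeT : ∀ i ∈ S, e' i ∈ T'.edgeSet := by
      intro i hi
      rw [hTedge]
      exact ⟨Set.mem_image_of_mem _ hi, fun hd => hnodiag i hi (Sym2.mk_isDiag_iff.mp hd)⟩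
    have hbridge : ∀ i ∈ S, ¬ (T' \ SimpleGraph.fromEdgeSet {e' i}).Reachable
        (cm (q i (σ i))) (cm (q i (σ i + 2))) := by
      intro i hi
      have hb : T'.IsBridge s(cm (q i (σ i)), cm (q i (σ i + 2))) :=
        (SimpleGraph.isAcyclic_iff_forall_edge_isBridge.mp htree'.2) (hedgeT i hi)
      exact SimpleGraph.isBridge_iff.mp hb
    -- the equivalence relation generated at stage T
    set Rel : Set (Fin m) → V → V → Prop := fun T => Relation.EqvGen
      (fun u v => K.Adj u v ∨ ∃ i ∈ T, u = q i (σ i) ∧ v = q i (σ i + 2)) with hRel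
    have hKrel : ∀ (T : Set (Fin m)) (u v : V), K.Reachable u v → Rel T u v := fun T =>
      Stmt18Aux.reachable_to_eqvGen (fun u v h => Relation.EqvGen.rel _ _ (Or.inl h))
    -- projection of Rel T to the component tree minus one edge
    have hproj : ∀ (T : Set (Fin m)), T ⊆ S → ∀ (i : Fin m), i ∉ T → i ∈ S →
        ∀ u v, Rel T u v →
        (T' \ SimpleGraph.fromEdgeSet {e' i}).Reachable (cm u) (cm v) := by
      intro T hTS i hiT hiS u v hrel
      induction hrel with
      | rel a b hab =>
        rcases hab with hab | ⟨j, hj, rfl, rfl⟩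
        · have hcc : cm a = cm b := SimpleGraph.ConnectedComponent.connectedComponentMk_eq_of_adj hab
          rw [hcc]
        · refine SimpleGraph.Adj.reachable ?_
          rw [SimpleGraph.sdiff_adj]
          constructor
          · rw [hT', SimpleGraph.fromEdgeSet_adj]
            exact ⟨⟨j, hTS hj, rfl⟩, hnodiag j (hTS hj)⟩
          · rw [SimpleGraph.fromEdgeSet_adj]
            rintro ⟨hmem, -⟩
            have hej : e' j = e' i := hmem
            obtain rfl := hij j (hTS hj) i hiS hej
            exact hiT hj
      | refl a => exact SimpleGraph.Reachable.refl _
      | symm a b _ ih => exact ih.symm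
      | trans a b c _ _ ih1 ih2 => exact ih1.trans ih2
    -- the main induction along the spanning tree
    have hmain : ∀ u v, (Kg (τf S)).Reachable u v ↔ Rel S u v := by
      refine Set.Finite.induction_on_subset (motive := fun T _ => ∀ u v, (Kg (τf T)).Reachable u v ↔ Rel T u v) S (Set.toFinite S) ?_ ?_
      · -- T = ∅
        intro u v
        have hτ : τf (∅ : Set (Fin m)) = σ := by
          funext i
          simp [hτf]
        rw [hτ, ← hKσ]
        constructor
        · exact fun h => Stmt18Aux.reachable_to_eqvGen
            (fun a b hab => Relation.EqvGen.rel _ _ (Or.inl hab)) u v h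
        · refine Stmt18Aux.eqvGen_to_reachable ?_ u v
          rintro a b (hab | ⟨i, hi, -⟩)
          · exact hab.reachable
          · exact absurd hi (Set.notMem_empty i)
      · -- insert i T
        rintro i T hiS hTS hiT ih u v
        have ihm : ∀ u v, (Kg (τf T)).Reachable u v ↔ Rel T u v := ih
        set τ : Fin m → Fin 4 := τf T with hτdef
        set τ' : Fin m → Fin 4 := τf (insert i T) with hτ'def
        have hτi : τ i = σ i := by
          rw [hτdef]; simp only [hτf]; exact if_neg hiT
        have hτ'i : τ' i = σ i + 1 := by
          rw [hτ'def]; simp only [hτf]; exact if_pos (Set.mem_insert _ _)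
        have hττ' : ∀ j, j ≠ i → τ' j = τ j := by
          intro j hj
          rw [hτ'def, hτdef]
          simp only [hτf, Set.mem_insert_iff, hj, false_or]
        -- edge transfer
        have hAB : ∀ e, e ∈ F ∪ Hs τ →
            e = E i (σ i) ∨ e = E i (σ i + 2) ∨ e ∈ F ∪ Hs τ' := by
          rintro e (he | ⟨j, he | he⟩)
          · exact Or.inr (Or.inr (Or.inl he))
          · by_cases hji : j = i
            · subst hji; rw [hτi] at he; exact Or.inl he
            · exact Or.inr (Or.inr (Or.inr ⟨j, Or.inl (by rw [hττ' j hji]; exact he)⟩))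
          · by_cases hji : j = i
            · subst hji; rw [hτi] at he; exact Or.inr (Or.inl he)
            · exact Or.inr (Or.inr (Or.inr ⟨j, Or.inr (by rw [hττ' j hji]; exact he)⟩))
        -- non-reachability of the two flipped half-edges in Kg τ
        have hnr : ¬ (Kg τ).Reachable (q i (σ i)) (q i (σ i + 2)) := by
          intro hre
          exact hbridge i hiS (hproj T hTS i hiT hiS _ _ ((ihm _ _).mp hre))
        -- matching values at the cycle i vertices
        have hg0 : gP τ (q i (σ i)) = q i (σ i + 1) := by
          rw [hgq τ i (σ i), hτi]
          have hw : ∀ t : Fin 4, t + swp (t - t) = t + 1 := by rw [hswp]; decide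
          rw [hw]
        have hg2 : gP τ (q i (σ i + 2)) = q i (σ i + 2 + 1) := by
          rw [hgq τ i (σ i + 2), hτi]
          have hw : ∀ t : Fin 4, t + swp ((t + 2) - t) = (t + 2) + 1 := by rw [hswp]; decide
          rw [hw]
        have hadj0 : (Kg τ).Adj (q i (σ i)) (q i (σ i + 1)) :=
          (hKadj τ _ _).mpr (Or.inr hg0.symm)
        have hadj2 : (Kg τ).Adj (q i (σ i + 2)) (q i (σ i + 2 + 1)) :=
          (hKadj τ _ _).mpr (Or.inr hg2.symm)
        -- detours around the two removed edges
        have hd1 : (Kg τ').Reachable (q i (σ i)) (q i (σ i + 1)) := by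
          have hdet := Stmt18Aux.detour (B := Kg τ') (hKadj τ) hff (hgg τ)
            (fun v => hfg τ v) (q i (σ i)) ?_
          · rwa [hg0] at hdet
          · intro a b hab hre hne
            rw [hg0] at hne
            have hmem := ((hKgmem τ a b).mp hab).1
            rcases hAB _ hmem with he | he | he
            · exact absurd he hne
            · exfalso
              rcases Sym2.eq_iff.mp he with ⟨rfl, rfl⟩ | ⟨rfl, rfl⟩
              · exact hnr hre
              · exact hnr (hre.trans hadj2.symm.reachable)
            · exact (hKgmem τ' a b).mpr ⟨he, hab.ne⟩
        have hd2 : (Kg τ').Reachable (q i (σ i + 2)) (q i (σ i + 2 + 1)) := by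
          have hdet := Stmt18Aux.detour (B := Kg τ') (hKadj τ) hff (hgg τ)
            (fun v => hfg τ v) (q i (σ i + 2)) ?_
          · rwa [hg2] at hdet
          · intro a b hab hre hne
            rw [hg2] at hne
            have hmem := ((hKgmem τ a b).mp hab).1
            rcases hAB _ hmem with he | he | he
            · exfalso
              rcases Sym2.eq_iff.mp he with ⟨rfl, rfl⟩ | ⟨rfl, rfl⟩
              · exact hnr hre.symm
              · exact hnr ((hre.trans hadj0.symm.reachable)).symm
            · exact absurd he hne
            · exact (hKgmem τ' a b).mpr ⟨he, hab.ne⟩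
        -- every Kg τ edge gives reachability in Kg τ'
        have hadjB : ∀ a b, (Kg τ).Adj a b → (Kg τ').Reachable a b := by
          intro a b hab
          rcases hAB _ ((hKgmem τ a b).mp hab).1 with he | he | he
          · rcases Sym2.eq_iff.mp he with ⟨rfl, rfl⟩ | ⟨rfl, rfl⟩
            · exact hd1
            · exact hd1.symm
          · rcases Sym2.eq_iff.mp he with ⟨rfl, rfl⟩ | ⟨rfl, rfl⟩
            · exact hd2
            · exact hd2.symm
          · exact ((hKgmem τ' a b).mpr ⟨he, hab.ne⟩).reachable
        have hreachB : ∀ a b, (Kg τ).Reachable a b → (Kg τ').Reachable a b :=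
          Stmt18Aux.reachable_of_adj_imp hadjB
        constructor
        · -- forward direction
          refine Stmt18Aux.reachable_to_eqvGen ?_ u v
          intro a b hab
          obtain ⟨hmem, hneab⟩ := (hKgmem τ' a b).mp hab
          rcases hmem with hFm | ⟨j, he | he⟩
          · exact Relation.EqvGen.rel _ _ (Or.inl ((hKmem a b).mpr ⟨Or.inl hFm, hneab⟩))
          · by_cases hji : j ∈ insert i T
            · have hj' : τ' j = σ j + 1 := by
                rw [hτ'def]; simp only [hτf]; exact if_pos hji
              rw [hj'] at he
              have hstep : Rel (insert i T) (q j (σ j + 1)) (q j (σ j + 1 + 1)) := by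
                rw [hT1 (σ j)]
                have r1 : Rel (insert i T) (q j (σ j + 1)) (q j (σ j)) :=
                  Relation.EqvGen.symm _ _
                    (Relation.EqvGen.rel _ _ (Or.inl (hKadjH1 j)))
                have r2 : Rel (insert i T) (q j (σ j)) (q j (σ j + 2)) :=
                  Relation.EqvGen.rel _ _ (Or.inr ⟨j, hji, rfl, rfl⟩)
                exact Relation.EqvGen.trans _ _ _ r1 r2
              rcases Sym2.eq_iff.mp he with ⟨rfl, rfl⟩ | ⟨rfl, rfl⟩
              · exact hstep
              · exact Relation.EqvGen.symm _ _ hstep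
            · have hj' : τ' j = σ j := by
                rw [hτ'def]; simp only [hτf]; exact if_neg hji
              rw [hj'] at he
              exact Relation.EqvGen.rel _ _
                (Or.inl ((hKmem a b).mpr ⟨Or.inr ⟨j, Or.inl he⟩, hneab⟩))
          · by_cases hji : j ∈ insert i T
            · have hj' : τ' j = σ j + 1 := by
                rw [hτ'def]; simp only [hτf]; exact if_pos hji
              rw [hj'] at he
              have hstep : Rel (insert i T) (q j (σ j + 1 + 2)) (q j (σ j + 1 + 2 + 1)) := by
                rw [hT2 (σ j), hT4 (σ j)]
                have r1 : Rel (insert i T) (q j (σ j + 2 + 1)) (q j (σ j + 2)) :=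
                  Relation.EqvGen.symm _ _
                    (Relation.EqvGen.rel _ _ (Or.inl (hKadjH2 j)))
                have r2 : Rel (insert i T) (q j (σ j + 2)) (q j (σ j)) :=
                  Relation.EqvGen.symm _ _
                    (Relation.EqvGen.rel _ _ (Or.inr ⟨j, hji, rfl, rfl⟩))
                exact Relation.EqvGen.trans _ _ _ r1 r2
              rcases Sym2.eq_iff.mp he with ⟨rfl, rfl⟩ | ⟨rfl, rfl⟩
              · exact hstep
              · exact Relation.EqvGen.symm _ _ hstep
            · have hj' : τ' j = σ j := by
                rw [hτ'def]; simp only [hτf]; exact if_neg hji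
              rw [hj'] at he
              exact Relation.EqvGen.rel _ _
                (Or.inl ((hKmem a b).mpr ⟨Or.inr ⟨j, Or.inr he⟩, hneab⟩))
        · -- backward direction
          refine Stmt18Aux.eqvGen_to_reachable ?_ u v
          rintro a b (hab | ⟨j, hj, rfl, rfl⟩)
          · exact hreachB _ _ ((ihm _ _).mpr (Relation.EqvGen.rel _ _ (Or.inl hab)))
          · rcases Set.mem_insert_iff.mp hj with rfl | hjT
            · -- j = i : use the new edge (σ+3, σ) and the second detour
              have hBadj : (Kg τ').Adj (q j (σ j + 2 + 1)) (q j (σ j)) := by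
                refine (hKgmem τ' _ _).mpr ⟨Or.inr ⟨j, Or.inr ?_⟩, ?_⟩
                · have hEeq : E j (τ' j + 2) = s(q j (σ j + 2 + 1), q j (σ j)) := by
                    show s(q j (τ' j + 2), q j (τ' j + 2 + 1)) = _
                    rw [hτ'i, hT2 (σ j), hT4 (σ j)]
                  rw [hEeq]
                · intro hcon
                  exact hT7 (σ j) (hq.mp hcon).2
              exact (hBadj.symm.reachable).trans hd2.symm
            · exact hreachB _ _
                ((ihm _ _).mpr (Relation.EqvGen.rel _ _ (Or.inr ⟨j, hjT, rfl, rfl⟩)))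
    -- every pair is Rel S - related, via connectivity of the tree
    have hRelAll : ∀ u v, Rel S u v := by
      have claim : ∀ (c d : K.ConnectedComponent) (w : T'.Walk c d) (u v : V),
          cm u = c → cm v = d → Rel S u v := by
        intro c d w
        induction w with
        | nil =>
          intro u v h1 h2
          exact hKrel S u v (SimpleGraph.ConnectedComponent.eq.mp (h1.trans h2.symm))
        | cons hadjE w' ih =>
          intro u v h1 h2
          have hadjE' := hadjE
          rw [hT', SimpleGraph.fromEdgeSet_adj] at hadjE'
          obtain ⟨⟨j, hjS, hej⟩, -⟩ := hadjE'
          rcases Sym2.eq_iff.mp hej with ⟨hc1, hc2⟩ | ⟨hc1, hc2⟩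
          · have r1 : Rel S u (q j (σ j)) :=
              hKrel S _ _ (SimpleGraph.ConnectedComponent.eq.mp (h1.trans hc1))
            have r2 : Rel S (q j (σ j)) (q j (σ j + 2)) :=
              Relation.EqvGen.rel _ _ (Or.inr ⟨j, hjS, rfl, rfl⟩)
            have r3 : Rel S (q j (σ j + 2)) v := ih _ _ hc2.symm h2
            exact Relation.EqvGen.trans _ _ _ r1 (Relation.EqvGen.trans _ _ _ r2 r3)
          · have r1 : Rel S u (q j (σ j + 2)) :=
              hKrel S _ _ (SimpleGraph.ConnectedComponent.eq.mp (h1.trans hc1))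
            have r2 : Rel S (q j (σ j + 2)) (q j (σ j)) :=
              Relation.EqvGen.symm _ _ (Relation.EqvGen.rel _ _ (Or.inr ⟨j, hjS, rfl, rfl⟩))
            have r3 : Rel S (q j (σ j)) v := ih _ _ hc2.symm h2
            exact Relation.EqvGen.trans _ _ _ r1 (Relation.EqvGen.trans _ _ _ r2 r3)
      intro u v
      obtain ⟨w⟩ := htree'.isConnected.preconnected (cm u) (cm v)
      exact claim _ _ w u v rfl rfl
    have hnonempty : Nonempty V := by
      obtain ⟨c⟩ := htree'.isConnected.nonempty
      obtain ⟨z, -⟩ := c.exists_rep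
      exact ⟨z⟩
    rw [SimpleGraph.connected_iff]
    exact ⟨fun u v => (hmain u v).mpr (hRelAll u v), hnonempty⟩
  -- assemble
  obtain ⟨v, w, hham, hedge⟩ := Stmt18Aux.ham_of_invol (hKG (τf S)) (hKadj (τf S))
    hff (hgg _) (fun v => hfg _ v) hconn
  refine ⟨v, w, hham, ?_⟩
  rw [hedge, hsymm, hKg, SimpleGraph.edgeSet_fromEdgeSet]
  ext e
  simp only [Set.mem_diff, Set.mem_setOf_eq, Set.mem_union]
  constructor
  · rintro (h | h)
    · exact ⟨Or.inl h, fun hd => (G.not_isDiag_of_mem_edgeSet (hF h)) hd⟩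
    · exact ⟨Or.inr h, fun hd => (G.not_isDiag_of_mem_edgeSet ((hHsub _ h).1)) hd⟩
  · exact fun h => h.1
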